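/- Let B : ℝ → ℝ be an N-function and let B̄ denote its conjugate. Let f₀ ≥ 0 and c > 0, let φ : ℝ → [0,∞) be even and nondecreasing on [0,∞) with B̄(φ(t)) ≤ B(c·t) for all t ∈ ℝ, and let h : ℝ → ℝ be a locally integrable function with |h(t)| ≤ f₀ + c·φ(t) for all t ∈ ℝ. Define H(u) = ∫₀^u h(t) dt. Then for every u ∈ ℝ, |H(u)| ≤ (1/c)·B̄(f₀) + (2 + 1/c)·B(c·u). -/

import Mathlib

/-- An N-function: continuous, convex, even, positive for positive arguments,
sublinear at `0` and superlinear at `∞`. -/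
def IsNFunction (M : ℝ → ℝ) : Prop :=
  Continuous M ∧ ConvexOn ℝ Set.univ M ∧ (∀ t : ℝ, M (-t) = M t) ∧
  (∀ t : ℝ, 0 < t → 0 < M t) ∧
  Filter.Tendsto (fun t => M t / t) (nhdsWithin 0 (Set.Ioi 0)) (nhds 0) ∧
  Filter.Tendsto (fun t => M t / t) Filter.atTop Filter.atTop

/-- The conjugate (Legendre transform) of an N-function:
`M̄ s = sup { |s|·t − M t : t ≥ 0 }`. -/
noncomputable def conjN (M : ℝ → ℝ) (s : ℝ) : ℝ :=
  sSup ((fun t => |s| * t - M t) '' Set.Ici (0 : ℝ))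

private lemma conjN_bddAbove (B : ℝ → ℝ) (hB : IsNFunction B) (s : ℝ) :
    BddAbove ((fun t => |s| * t - B t) '' Set.Ici (0 : ℝ)) := by
  obtain ⟨hcont, -, -, -, -, htop⟩ := hB
  obtain ⟨T, hT⟩ := (htop.eventually_ge_atTop (|s| + 1)).exists_forall_of_atTop
  set T' : ℝ := max T 1 with hT'
  have hT'1 : (1 : ℝ) ≤ T' := le_max_right _ _
  obtain ⟨x₀, hx₀mem, hx₀⟩ := (isCompact_Icc (a := (0:ℝ)) (b := T')).exists_isMinOn
    (Set.nonempty_Icc.2 (by linarith)) (hcont.continuousOn)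
  refine ⟨max (|s| * T' - B x₀) 0, ?_⟩
  rintro y ⟨t, ht, rfl⟩
  dsimp only
  simp only [Set.mem_Ici] at ht
  by_cases hle : t ≤ T'
  · have h1 : |s| * t ≤ |s| * T' := mul_le_mul_of_nonneg_left hle (abs_nonneg s)
    have h2 : B x₀ ≤ B t := hx₀ ⟨ht, hle⟩
    exact le_max_of_le_left (by linarith)
  · push_neg at hle
    have htT : T ≤ t := le_trans (le_max_left _ _) hle.le
    have hpos : (0 : ℝ) < t := lt_of_lt_of_le (by linarith) le_rfl
    have h3 : |s| + 1 ≤ B t / t := hT t htT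
    have h4 : (|s| + 1) * t ≤ B t := by
      rw [← div_mul_cancel₀ (B t) (ne_of_gt hpos)]
      exact mul_le_mul_of_nonneg_right h3 hpos.le
    refine le_max_of_le_right ?_
    nlinarith [abs_nonneg s]

private lemma young (B : ℝ → ℝ) (hB : IsNFunction B) (s t : ℝ) (ht : 0 ≤ t) :
    |s| * t ≤ conjN B s + B t := by
  have : |s| * t - B t ≤ conjN B s :=
    le_csSup (conjN_bddAbove B hB s) ⟨t, ht, rfl⟩
  linarith

/-- the growth condition `|h t| ≤ f₀ + c·φ t` with `B̄(φ t) ≤ B(c t)`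
implies the growth bound `|H u| ≤ (1/c)·B̄ f₀ + (2 + 1/c)·B (c u)` for the
primitive `H u = ∫₀ᵘ h`. -/
theorem primitive_growth_bound
    (B : ℝ → ℝ) (hB : IsNFunction B)
    (f₀ c : ℝ) (hf₀ : 0 ≤ f₀) (hc : 0 < c)
    (φ : ℝ → ℝ) (hφ_nonneg : ∀ t : ℝ, 0 ≤ φ t)
    (hφ_even : ∀ t : ℝ, φ (-t) = φ t)
    (hφ_mono : MonotoneOn φ (Set.Ici (0 : ℝ)))
    (hφ : ∀ t : ℝ, conjN B (φ t) ≤ B (c * t))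
    (h : ℝ → ℝ)
    (hloc : MeasureTheory.LocallyIntegrable h MeasureTheory.volume)
    (hgrowth : ∀ t : ℝ, |h t| ≤ f₀ + c * φ t) :
    ∀ u : ℝ, |∫ t in (0 : ℝ)..u, h t| ≤ (1 / c) * conjN B f₀ + (2 + 1 / c) * B (c * u) := by
  intro u
  have hBeven : ∀ t : ℝ, B (-t) = B t := hB.2.2.1
  -- B(c*u) = B(c*|u|)
  have hBabs : B (c * |u|) = B (c * u) := by
    rcases abs_choice u with hu | hu
    · rw [hu]
    · rw [hu, mul_neg, hBeven]
  -- bound on |h t| for t in the interval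
  have hbound : ∀ t ∈ Set.uIoc (0 : ℝ) u, ‖h t‖ ≤ f₀ + c * φ |u| := by
    intro t ht
    have htabs : |t| ≤ |u| := by
      rcases le_or_gt 0 u with hu | hu
      · rw [Set.uIoc_of_le hu] at ht
        rw [abs_of_pos ht.1, abs_of_nonneg hu]; exact ht.2
      · rw [Set.uIoc_of_ge hu.le] at ht
        rw [abs_of_nonpos ht.2, abs_of_neg hu]; linarith [ht.1]
    have hφt : φ t ≤ φ |u| := by
      calc φ t = φ |t| := by
              rcases abs_choice t with h1 | h1
              · rw [h1]
              · rw [h1, hφ_even]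
        _ ≤ φ |u| := hφ_mono (abs_nonneg t) (abs_nonneg u) htabs
    calc ‖h t‖ = |h t| := rfl
      _ ≤ f₀ + c * φ t := hgrowth t
      _ ≤ f₀ + c * φ |u| := by nlinarith
  have hint : |∫ t in (0 : ℝ)..u, h t| ≤ (f₀ + c * φ |u|) * |u - 0| :=
    intervalIntegral.norm_integral_le_of_norm_le_const hbound
  rw [sub_zero] at hint
  -- Young for f₀
  have hy1 : f₀ * (c * |u|) ≤ conjN B f₀ + B (c * |u|) := by
    have := young B hB f₀ (c * |u|) (by positivity)
    rwa [abs_of_nonneg hf₀] at this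
  -- Young for φ|u|
  have hy2 : φ |u| * (c * |u|) ≤ conjN B (φ |u|) + B (c * |u|) := by
    have := young B hB (φ |u|) (c * |u|) (by positivity)
    rwa [abs_of_nonneg (hφ_nonneg _)] at this
  have hy2' : φ |u| * (c * |u|) ≤ 2 * B (c * |u|) := by
    have := hφ |u|
    linarith
  -- conjN B f₀ ≥ 0? not needed; combine
  rw [← hBabs]
  have hcinv : (0 : ℝ) < 1 / c := by positivity
  have key : (f₀ + c * φ |u|) * |u| ≤ (1 / c) * conjN B f₀ + (2 + 1 / c) * B (c * |u|) := by
    have e1 : f₀ * |u| = (1 / c) * (f₀ * (c * |u|)) := by field_simp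
    have e2 : c * φ |u| * |u| = φ |u| * (c * |u|) := by ring
    have h1 : f₀ * |u| ≤ (1 / c) * (conjN B f₀ + B (c * |u|)) := by
      rw [e1]; exact mul_le_mul_of_nonneg_left hy1 hcinv.le
    nlinarith
  linarith
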